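/- Let θ be a CPWL function, let φ₀ and Φ be twice continuously differentiable around x̄ in the composite optimization setting, and suppose x̄ is a fully stable locally optimal solution of the canonically perturbed problem: minimize φ₀(x) + θ(Φ(x)+p₂) − ⟨p₁,x⟩ over x ∈ ℝ^n, at (p̄₁,p̄₂) = (0,0); i.e., there exist γ > 0 and neighborhoods U × W of (0,0) ∈ ℝ^n × ℝ^m such that the map (p₁,p₂) ↦ M_γ(p₁,p₂) := argmin{φ₀(x) + θ(Φ(x)+p₂) − ⟨p₁,x⟩ : ‖x − x̄‖ ≤ γ} is single-valued and Lipschitz continuous on U × W with M_γ(0,0) = {x̄}, and the value function (p₁,p₂) ↦ m_γ(p₁,p₂) := inf{φ₀(x) + θ(Φ(x)+p₂) − ⟨p₁,x⟩ : ‖x − x̄‖ ≤ γ} is Lipschitz continuous on U × W. Then every v ∈ Λ_com(x̄) is a noncritical multiplier. -/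

import Mathlib

open Filter Topology Set RealInnerProductSpace

noncomputable section

abbrev Ev (k : ℕ) := EuclideanSpace ℝ (Fin k)

/-- The Bouligand–Severi tangent cone to a set `s` at `x`. -/
def tcone {E : Type*} [NormedAddCommGroup E] [NormedSpace ℝ E] (s : Set E) (x : E) : Set E :=
  {w | ∃ (z : ℕ → E) (c : ℕ → ℝ), (∀ k, z k ∈ s) ∧ (∀ k, 0 ≤ c k) ∧
      Tendsto z atTop (𝓝 x) ∧ Tendsto (fun k => c k • (z k - x)) atTop (𝓝 w)}

/-- The data of a convex piecewise linear (CPWL) extended-real-valued function on `ℝ^m`: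
`θ(z) = max_i (⟨a i, z⟩ - al i)` on the polyhedron `dom θ = {z | ⟨d i, z⟩ ≤ be i ∀ i}`,
and `θ(z) = +∞` outside of it. -/
structure CPWL (m : ℕ) where
  l : ℕ
  p : ℕ
  hl : 0 < l
  a : Fin l → Ev m
  al : Fin l → ℝ
  d : Fin p → Ev m
  be : Fin p → ℝ
  dom_nonempty : ∃ z : Ev m, ∀ i, ⟪d i, z⟫ ≤ be i

namespace CPWL

variable {m : ℕ} (θ : CPWL m)

/-- The (polyhedral) domain of the CPWL function. -/
def dom : Set (Ev m) := {z | ∀ i, ⟪θ.d i, z⟫ ≤ θ.be i}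

/-- The real value `max_i (⟨a i, z⟩ - al i)` of the CPWL function (meaningful on its domain). -/
def val (z : Ev m) : ℝ := ⨆ i : Fin θ.l, (⟪θ.a i, z⟫ - θ.al i)

/-- The CPWL function as an extended-real-valued function. -/
def eval (z : Ev m) : EReal :=
  @ite _ (z ∈ θ.dom) (Classical.propDecidable _) ((θ.val z : ℝ) : EReal) ⊤

/-- The subdifferential (of convex analysis) of the CPWL function. -/
def subdiff (z : Ev m) : Set (Ev m) :=
  {v | z ∈ θ.dom ∧ ∀ z' ∈ θ.dom, ⟪v, z' - z⟫ ≤ θ.val z' - θ.val z}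

/-- Active indices `K(z)` of the max-representation. -/
def Kact (z : Ev m) : Set (Fin θ.l) := {i | θ.val z = ⟪θ.a i, z⟫ - θ.al i}

/-- Active indices `I(z)` of the domain constraints. -/
def Iact (z : Ev m) : Set (Fin θ.p) := {i | ⟪θ.d i, z⟫ = θ.be i}

/-- The critical cone `𝒦(z̄,v̄) = {w ∈ T(z̄; dom θ) : ⟨v̄,w⟩ = θ′(z̄;w)}`. -/
def crit (zb vb : Ev m) : Set (Ev m) :=
  {w | w ∈ tcone θ.dom zb ∧
    Tendsto (fun t : ℝ => (θ.val (zb + t • w) - θ.val zb) / t) (𝓝[>] (0 : ℝ))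
      (𝓝 ⟪vb, w⟫)}

/-- The graph of the subdifferential mapping. -/
def gph : Set (Ev m × Ev m) := {zv | zv.2 ∈ θ.subdiff zv.1}

/-- The graphical derivative `(D∂θ)(z̄,v̄)(u)`. -/
def Dsub (zb vb u : Ev m) : Set (Ev m) := {w | (u, w) ∈ tcone θ.gph (zb, vb)}

/-- The regular coderivative `(D̂*∂θ)(z̄,v̄)(u)`. -/
def Dhat (zb vb u : Ev m) : Set (Ev m) :=
  {w | ∀ h ∈ tcone θ.gph (zb, vb), ⟪w, h.1⟫ - ⟪u, h.2⟫ ≤ 0}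

end CPWL

section VarSys

variable {n m : ℕ}

/-- The adjoint `∇Φ(x)*` of the Jacobian of `Φ` at `x`. -/
def adjD (Φ : Ev n → Ev m) (x : Ev n) : Ev m →L[ℝ] Ev n :=
  ContinuousLinearMap.adjoint (fderiv ℝ Φ x)

/-- `Ψ(x,v) = f(x) + ∇Φ(x)* v`. -/
def Psi (f : Ev n → Ev n) (Φ : Ev n → Ev m) (x : Ev n) (v : Ev m) : Ev n :=
  f x + adjD Φ x v

/-- The partial Jacobian `∇ₓΨ(x̄,v̄)`. -/
def gradxPsi (f : Ev n → Ev n) (Φ : Ev n → Ev m) (xb : Ev n) (vb : Ev m) :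
    Ev n →L[ℝ] Ev n :=
  fderiv ℝ (fun x => Psi f Φ x vb) xb

/-- The Lagrange multiplier set `Λ(x̄)` of the variational system. -/
def Lam (f : Ev n → Ev n) (Φ : Ev n → Ev m) (θ : CPWL m) (xb : Ev n) : Set (Ev m) :=
  {v | Psi f Φ xb v = 0 ∧ v ∈ θ.subdiff (Φ xb)}

/-- `v̄` is a critical multiplier for the variational system. -/
def IsCritical (f : Ev n → Ev n) (Φ : Ev n → Ev m) (θ : CPWL m) (xb : Ev n) (vb : Ev m) :
    Prop :=
  ∃ ξ : Ev n, ξ ≠ 0 ∧ ∃ w ∈ θ.Dsub (Φ xb) vb (fderiv ℝ Φ xb ξ),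
    gradxPsi f Φ xb vb ξ + adjD Φ xb w = 0

/-- The solution map of the canonically perturbed variational system. -/
def Smap (f : Ev n → Ev n) (Φ : Ev n → Ev m) (θ : CPWL m) (p₁ : Ev n) (p₂ : Ev m) :
    Set (Ev n × Ev m) :=
  {xv | Psi f Φ xv.1 xv.2 = p₁ ∧ xv.2 ∈ θ.subdiff (Φ xv.1 + p₂)}

end VarSys

section General

variable {n m : ℕ}

/-- The subdifferential of a general extended-real-valued function. -/
def subdiffE (θ : Ev m → EReal) (z : Ev m) : Set (Ev m) :=
  {v | ∀ z', ((⟪v, z' - z⟫ : ℝ) : EReal) ≤ θ z' - θ z}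

/-- The graph of the subdifferential of a general extended-real-valued function. -/
def gphE (θ : Ev m → EReal) : Set (Ev m × Ev m) := {zv | zv.2 ∈ subdiffE θ zv.1}

/-- The graphical derivative of the subdifferential, general case. -/
def DsubE (θ : Ev m → EReal) (zb vb u : Ev m) : Set (Ev m) :=
  {w | (u, w) ∈ tcone (gphE θ) (zb, vb)}

/-- The Lagrange multiplier set, general case. -/
def LamE (f : Ev n → Ev n) (Φ : Ev n → Ev m) (θ : Ev m → EReal) (xb : Ev n) :
    Set (Ev m) :=
  {v | Psi f Φ xb v = 0 ∧ v ∈ subdiffE θ (Φ xb)}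

/-- The solution map of the canonically perturbed variational system, general case. -/
def SmapE (f : Ev n → Ev n) (Φ : Ev n → Ev m) (θ : Ev m → EReal) (p₁ : Ev n)
    (p₂ : Ev m) : Set (Ev n × Ev m) :=
  {xv | Psi f Φ xv.1 xv.2 = p₁ ∧ xv.2 ∈ subdiffE θ (Φ xv.1 + p₂)}

end General

section Composite

variable {n m : ℕ}

/-- The gradient `∇ₓL(·,v)` of the Lagrangian `L(x,v) = φ₀(x) + ⟨Φ(x),v⟩`. -/
def gradL (φ₀ : Ev n → ℝ) (Φ : Ev n → Ev m) (v : Ev m) (x : Ev n) : Ev n :=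
  gradient (fun y => φ₀ y + ⟪Φ y, v⟫) x

/-- The Hessian `∇²ₓₓL(x̄,v)` as a linear operator. -/
def HessOp (φ₀ : Ev n → ℝ) (Φ : Ev n → Ev m) (v : Ev m) (xb : Ev n) : Ev n →L[ℝ] Ev n :=
  fderiv ℝ (gradL φ₀ Φ v) xb

/-- The Lagrange multiplier set `Λ_com(x̄)` of the composite optimization problem. -/
def LamCom (φ₀ : Ev n → ℝ) (Φ : Ev n → Ev m) (θ : CPWL m) (xb : Ev n) : Set (Ev m) :=
  {v | gradient φ₀ xb + adjD Φ xb v = 0 ∧ v ∈ θ.subdiff (Φ xb)}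

/-- Criticality of a multiplier in the composite optimization setting. -/
def IsCriticalCom (φ₀ : Ev n → ℝ) (Φ : Ev n → Ev m) (θ : CPWL m) (xb : Ev n) (v : Ev m) :
    Prop :=
  ∃ ξ : Ev n, ξ ≠ 0 ∧ ∃ w ∈ θ.Dsub (Φ xb) v (fderiv ℝ Φ xb ξ),
    HessOp φ₀ Φ v xb ξ + adjD Φ xb w = 0

/-- The solution map of the canonically perturbed KKT system of composite optimization. -/
def SKKT (φ₀ : Ev n → ℝ) (Φ : Ev n → Ev m) (θ : CPWL m) (p₁ : Ev n) (p₂ : Ev m) :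
    Set (Ev n × Ev m) :=
  {xv | gradient φ₀ xv.1 + adjD Φ xv.1 xv.2 = p₁ ∧ xv.2 ∈ θ.subdiff (Φ xv.1 + p₂)}

/-- `x̄` is a local minimizer of `φ₀ + θ∘Φ`. -/
def LocalMin (φ₀ : Ev n → ℝ) (Φ : Ev n → Ev m) (θ : CPWL m) (xb : Ev n) : Prop :=
  ∃ U ∈ 𝓝 xb, ∀ x ∈ U,
    ((φ₀ xb : ℝ) : EReal) + θ.eval (Φ xb) ≤ ((φ₀ x : ℝ) : EReal) + θ.eval (Φ x)

end Composite

section Calmness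

variable {n m : ℕ}

/-- Isolated calmness of a solution map at `((0,0), q0)`. -/
def IsolCalm (S : Ev n × Ev m → Set (Ev n × Ev m)) (q0 : Ev n × Ev m) : Prop :=
  ∃ c : ℝ, 0 ≤ c ∧ ∃ U ∈ 𝓝 (0 : Ev n × Ev m), ∃ V ∈ 𝓝 q0,
    ∀ p ∈ U, ∀ q ∈ S p ∩ V, ‖q - q0‖ ≤ c * (‖p.1‖ + ‖p.2‖)

/-- Robust isolated calmness of a solution map at `((0,0), q0)`. -/
def RobustIsolCalm (S : Ev n × Ev m → Set (Ev n × Ev m)) (q0 : Ev n × Ev m) : Prop :=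
  ∃ c : ℝ, 0 ≤ c ∧ ∃ U ∈ 𝓝 (0 : Ev n × Ev m), ∃ V ∈ 𝓝 q0,
    (∀ p ∈ U, ∀ q ∈ S p ∩ V, ‖q - q0‖ ≤ c * (‖p.1‖ + ‖p.2‖)) ∧
    (∀ p ∈ U, (S p ∩ V).Nonempty)

/-- The Lipschitz-like (Aubin) property of a solution map around `((0,0), q0)`. -/
def LipschitzLike (S : Ev n × Ev m → Set (Ev n × Ev m)) (q0 : Ev n × Ev m) : Prop :=
  ∃ c : ℝ, 0 ≤ c ∧ ∃ U ∈ 𝓝 (0 : Ev n × Ev m), ∃ V ∈ 𝓝 q0,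
    ∀ p ∈ U, ∀ p' ∈ U, ∀ q ∈ S p ∩ V, ∃ q' ∈ S p', ‖q - q'‖ ≤ c * ‖p - p'‖

end Calmness

/-- The extended-real-valued objective of the two-parametrically perturbed composite problem. -/
def objFS {n m : ℕ} (φ₀ : Ev n → ℝ) (Φ : Ev n → Ev m) (θ : CPWL m)
    (p₁ : Ev n) (p₂ : Ev m) (x : Ev n) : EReal :=
  ((φ₀ x - ⟪p₁, x⟫ : ℝ) : EReal) + θ.eval (Φ x + p₂)

/-- The localized argmin set `M_γ(p₁,p₂)` (empty where the objective is `+∞`). -/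
def Mgam {n m : ℕ} (φ₀ : Ev n → ℝ) (Φ : Ev n → Ev m) (θ : CPWL m) (xb : Ev n)
    (γ : ℝ) (p₁ : Ev n) (p₂ : Ev m) : Set (Ev n) :=
  {x | ‖x - xb‖ ≤ γ ∧ objFS φ₀ Φ θ p₁ p₂ x ≠ ⊤ ∧
    ∀ y : Ev n, ‖y - xb‖ ≤ γ → objFS φ₀ Φ θ p₁ p₂ x ≤ objFS φ₀ Φ θ p₁ p₂ y}

/-- The localized optimal value function `m_γ(p₁,p₂)`. -/
def mgam {n m : ℕ} (φ₀ : Ev n → ℝ) (Φ : Ev n → Ev m) (θ : CPWL m) (xb : Ev n)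
    (γ : ℝ) (p₁ : Ev n) (p₂ : Ev m) : EReal :=
  ⨅ (x : Ev n) (_ : ‖x - xb‖ ≤ γ), objFS φ₀ Φ θ p₁ p₂ x


namespace CPWL
variable {m : ℕ} (θ : CPWL m)

lemma term_le_val (z : Ev m) (i : Fin θ.l) : ⟪θ.a i, z⟫ - θ.al i ≤ θ.val z := by
  unfold val
  exact le_ciSup (f := fun i : Fin θ.l => ⟪θ.a i, z⟫ - θ.al i)
    (Set.Finite.bddAbove (Set.finite_range _)) i

lemma exists_active (z : Ev m) : ∃ i, θ.val z = ⟪θ.a i, z⟫ - θ.al i := by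
  have : Nonempty (Fin θ.l) := ⟨⟨0, θ.hl⟩⟩
  obtain ⟨i, hi⟩ := Finite.exists_max (fun i : Fin θ.l => ⟪θ.a i, z⟫ - θ.al i)
  exact ⟨i, le_antisymm (ciSup_le hi) (θ.term_le_val z i)⟩

lemma val_le (z : Ev m) {r : ℝ} (h : ∀ i, ⟪θ.a i, z⟫ - θ.al i ≤ r) : θ.val z ≤ r := by
  have : Nonempty (Fin θ.l) := ⟨⟨0, θ.hl⟩⟩
  exact ciSup_le h

/-- Key consequences of a tangent vector to the subdifferential graph. -/
lemma cone_key {zb v u w : Ev m} (hv : v ∈ θ.subdiff zb)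
    (hw : (u, w) ∈ tcone θ.gph (zb, v)) :
    0 ≤ ⟪u, w⟫ ∧
      ∀ᶠ t in 𝓝[>] (0:ℝ),
        (zb + t • u ∈ θ.dom ∧ θ.val (zb + t • u) ≤ θ.val zb + t * ⟪v, u⟫) := by
  obtain ⟨zv, c, hmem, hc, hlim, hslim⟩ := hw
  have hzb : zb ∈ θ.dom := hv.1
  set z : ℕ → Ev m := fun k => (zv k).1
  set vv : ℕ → Ev m := fun k => (zv k).2
  have hz : Tendsto z atTop (𝓝 zb) := (continuous_fst.tendsto _).comp hlim
  have hvv : Tendsto vv atTop (𝓝 v) := (continuous_snd.tendsto _).comp hlim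
  have hcu : Tendsto (fun k => c k • (z k - zb)) atTop (𝓝 u) := by
    have := (continuous_fst.tendsto _).comp hslim
    simpa [Function.comp_def, Prod.smul_def] using this
  have hcw : Tendsto (fun k => c k • (vv k - v)) atTop (𝓝 w) := by
    have := (continuous_snd.tendsto _).comp hslim
    simpa [Function.comp_def, Prod.smul_def] using this
  have hzdom : ∀ k, z k ∈ θ.dom := fun k => (hmem k).1
  have hsub : ∀ k, vv k ∈ θ.subdiff (z k) := fun k => hmem k
  -- monotonicity
  have hmono : 0 ≤ ⟪u, w⟫ := by
    have hseq : ∀ k, 0 ≤ ⟪c k • (z k - zb), c k • (vv k - v)⟫ := by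
      intro k
      have h1 : ⟪v, z k - zb⟫ ≤ θ.val (z k) - θ.val zb := hv.2 (z k) (hzdom k)
      have h2 : ⟪vv k, zb - z k⟫ ≤ θ.val zb - θ.val (z k) := (hsub k).2 zb hzb
      have h3 : 0 ≤ ⟪vv k - v, z k - zb⟫ := by
        have := add_le_add h1 h2
        rw [inner_sub_left]
        have h4 : ⟪vv k, zb - z k⟫ = -⟪vv k, z k - zb⟫ := by
          rw [← neg_sub, inner_neg_right]
        nlinarith [h1, h2, h4]
      calc (0:ℝ) ≤ c k * c k * ⟪vv k - v, z k - zb⟫ :=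
            mul_nonneg (mul_nonneg (hc k) (hc k)) h3
        _ = ⟪c k • (z k - zb), c k • (vv k - v)⟫ := by
            rw [real_inner_smul_left, real_inner_smul_right, real_inner_comm]; ring
    exact le_of_tendsto_of_tendsto' tendsto_const_nhds (hcu.inner hcw) hseq
  refine ⟨hmono, ?_⟩
  -- domain directions
  have hdomdir : ∀ i : Fin θ.p, ∀ᶠ t in 𝓝[>] (0:ℝ), ⟪θ.d i, zb + t • u⟫ ≤ θ.be i := by
    intro i
    rcases lt_or_eq_of_le (hzb i) with hlt | heq
    · have hcont : Tendsto (fun t : ℝ => ⟪θ.d i, zb + t • u⟫) (𝓝[>] 0) (𝓝 ⟪θ.d i, zb⟫) := by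
        have : Continuous fun t : ℝ => ⟪θ.d i, zb + t • u⟫ :=
          continuous_const.inner (continuous_const.add (continuous_id.smul continuous_const))
        simpa using (this.tendsto 0).mono_left nhdsWithin_le_nhds
      exact hcont.eventually_le_const hlt
    · have hdir : ⟪θ.d i, u⟫ ≤ 0 := by
        have hseq : ∀ k, ⟪θ.d i, c k • (z k - zb)⟫ ≤ 0 := by
          intro k
          rw [inner_smul_right, inner_sub_right]
          have := hzdom k i
          nlinarith [hc k, hzdom k i, heq]
        have hlim' : Tendsto (fun k => ⟪θ.d i, c k • (z k - zb)⟫) atTop (𝓝 ⟪θ.d i, u⟫) :=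
          tendsto_const_nhds.inner hcu
        exact le_of_tendsto_of_tendsto' hlim' tendsto_const_nhds hseq
      filter_upwards [self_mem_nhdsWithin] with t ht
      rw [inner_add_right, inner_smul_right]
      nlinarith [le_of_lt (Set.mem_Ioi.mp ht)]
  -- value bound directions
  have hvaldir : ∀ i : Fin θ.l, ∀ᶠ t in 𝓝[>] (0:ℝ),
      ⟪θ.a i, zb + t • u⟫ - θ.al i ≤ θ.val zb + t * ⟪v, u⟫ := by
    intro i
    rcases lt_or_eq_of_le (θ.term_le_val zb i) with hlt | heq
    · have hcont : Tendsto (fun t : ℝ => ⟪θ.a i, zb + t • u⟫ - θ.al i - t * ⟪v, u⟫)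
          (𝓝[>] 0) (𝓝 (⟪θ.a i, zb⟫ - θ.al i)) := by
        have : Continuous fun t : ℝ => ⟪θ.a i, zb + t • u⟫ - θ.al i - t * ⟪v, u⟫ :=
          ((continuous_const.inner (continuous_const.add
            (continuous_id.smul continuous_const))).sub continuous_const).sub
            (continuous_id.mul continuous_const)
        simpa using (this.tendsto 0).mono_left nhdsWithin_le_nhds
      filter_upwards [hcont.eventually_le_const hlt] with t ht
      linarith
    · -- active index: ⟪a i, u⟫ ≤ ⟪v, u⟫
      have hdir : ⟪θ.a i, u⟫ ≤ ⟪v, u⟫ := by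
        have hseq : ∀ k, ⟪θ.a i, c k • (z k - zb)⟫ ≤ ⟪vv k, c k • (z k - zb)⟫ := by
          intro k
          have h1 : ⟪θ.a i, z k⟫ - θ.al i ≤ θ.val (z k) := θ.term_le_val (z k) i
          have h2 : θ.val (z k) - θ.val zb ≤ ⟪vv k, z k - zb⟫ := by
            have := (hsub k).2 zb hzb
            have h4 : ⟪vv k, zb - z k⟫ = -⟪vv k, z k - zb⟫ := by
              rw [← neg_sub, inner_neg_right]
            linarith
          rw [inner_smul_right, inner_smul_right, inner_sub_right]
          have h5 : ⟪θ.a i, z k⟫ - ⟪θ.a i, zb⟫ ≤ ⟪vv k, z k - zb⟫ := by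
            linarith
          nlinarith [hc k]
        have l1 : Tendsto (fun k => ⟪θ.a i, c k • (z k - zb)⟫) atTop (𝓝 ⟪θ.a i, u⟫) :=
          tendsto_const_nhds.inner hcu
        have l2 : Tendsto (fun k => ⟪vv k, c k • (z k - zb)⟫) atTop (𝓝 ⟪v, u⟫) :=
          hvv.inner hcu
        exact le_of_tendsto_of_tendsto' l1 l2 hseq
      filter_upwards [self_mem_nhdsWithin] with t ht
      rw [inner_add_right, inner_smul_right]
      have ht' : (0:ℝ) ≤ t := le_of_lt ht
      nlinarith [heq]
  have h1 : ∀ᶠ t in 𝓝[>] (0:ℝ), ∀ i : Fin θ.p, ⟪θ.d i, zb + t • u⟫ ≤ θ.be i :=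
    eventually_all.mpr hdomdir
  have h2 : ∀ᶠ t in 𝓝[>] (0:ℝ), ∀ i : Fin θ.l,
      ⟪θ.a i, zb + t • u⟫ - θ.al i ≤ θ.val zb + t * ⟪v, u⟫ :=
    eventually_all.mpr hvaldir
  filter_upwards [h1, h2] with t ht1 ht2
  exact ⟨ht1, θ.val_le _ ht2⟩


end CPWL

section Helpers

variable {n m : ℕ}

lemma objFS_eq_coe (φ₀ : Ev n → ℝ) (Φ : Ev n → Ev m) (θ : CPWL m) (p₁ : Ev n)
    (p₂ : Ev m) (x : Ev n) (h : Φ x + p₂ ∈ θ.dom) :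
    objFS φ₀ Φ θ p₁ p₂ x = ((φ₀ x - ⟪p₁, x⟫ + θ.val (Φ x + p₂) : ℝ) : EReal) := by
  unfold objFS CPWL.eval
  rw [if_pos h, ← EReal.coe_add]

lemma objFS_ne_top_iff (φ₀ : Ev n → ℝ) (Φ : Ev n → Ev m) (θ : CPWL m) (p₁ : Ev n)
    (p₂ : Ev m) (x : Ev n) :
    objFS φ₀ Φ θ p₁ p₂ x ≠ ⊤ ↔ Φ x + p₂ ∈ θ.dom := by
  constructor
  · intro h
    by_contra hdom
    apply h
    unfold objFS CPWL.eval
    rw [if_neg hdom]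
    exact EReal.add_top_of_ne_bot (EReal.coe_ne_bot _)
  · intro h
    rw [objFS_eq_coe _ _ _ _ _ _ h]
    exact EReal.coe_ne_top _

/-- The uniform quadratic growth property derived from full stability data. -/
lemma growth (θ : CPWL m) (φ₀ : Ev n → ℝ) (Φ : Ev n → Ev m) (xb : Ev n)
    (γ : ℝ) (U : Set (Ev n)) (W : Set (Ev m)) (hU : U ∈ 𝓝 0)
    (g : Ev n × Ev m → Ev n) (c : NNReal) (hg : LipschitzOnWith c g (U ×ˢ W))
    (hMg : ∀ p₁ ∈ U, ∀ p₂ ∈ W, Mgam φ₀ Φ θ xb γ p₁ p₂ = {g (p₁, p₂)})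
    (ρ : ℝ) (hρ : 0 < ρ) (hρU : Metric.closedBall (0 : Ev n) ρ ⊆ U)
    (p₂ : Ev m) (hp₂ : p₂ ∈ W) (x : Ev n) (hx : ‖x - xb‖ ≤ γ)
    (hdomx : Φ x + p₂ ∈ θ.dom)
    (hd : ‖x - g (0, p₂)‖ ≤ 2 * max (c : ℝ) 1 * ρ) :
    φ₀ (g (0,p₂)) + θ.val (Φ (g (0,p₂)) + p₂)
      + (1 / (4 * max (c : ℝ) 1)) * ‖x - g (0,p₂)‖^2
    ≤ φ₀ x + θ.val (Φ x + p₂) := by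
  have hU0 : (0 : Ev n) ∈ U := mem_of_mem_nhds hU
  set cb : ℝ := max (c : ℝ) 1 with hcb
  have hcb1 : (1:ℝ) ≤ cb := le_max_right _ _
  have hcb0 : (0:ℝ) < cb := lt_of_lt_of_le one_pos hcb1
  set gp := g (0, p₂) with hgp
  have hgpm : gp ∈ Mgam φ₀ Φ θ xb γ 0 p₂ := by
    rw [hMg 0 hU0 p₂ hp₂]; rfl
  obtain ⟨hb, hne, hmin⟩ := hgpm
  have hdomgp : Φ gp + p₂ ∈ θ.dom := (objFS_ne_top_iff _ _ _ _ _ _).mp hne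
  set d : ℝ := ‖x - gp‖ with hdd
  rcases eq_or_lt_of_le (norm_nonneg (x - gp)) with h0 | h0
  · -- d = 0 : x = gp
    have hxg : x = gp := by
      have h1 : x - gp = 0 := by
        rw [← norm_eq_zero]; exact h0.symm
      exact sub_eq_zero.mp h1
    rw [hxg]
    simp only [hdd]
    rw [← h0]
    norm_num
  · -- d > 0
    set e : Ev n := ‖x - gp‖⁻¹ • (x - gp) with he
    have hxne : x - gp ≠ 0 := by
      intro hh; rw [hh, norm_zero] at h0; exact lt_irrefl _ h0
    have hnorme : ‖e‖ = 1 := norm_smul_inv_norm hxne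
    set s : ℝ := d / (2 * cb) with hs
    have hs0 : 0 < s := div_pos h0 (by linarith)
    have hsρ : s ≤ ρ := by
      rw [hs, div_le_iff₀ (by linarith : (0:ℝ) < 2 * cb)]
      calc d ≤ 2 * cb * ρ := hd
        _ = ρ * (2 * cb) := by ring
    have hseU : s • e ∈ U := by
      apply hρU
      rw [Metric.mem_closedBall, dist_zero_right, norm_smul, hnorme,
        Real.norm_eq_abs, abs_of_pos hs0, mul_one]
      exact hsρ
    set g' := g (s • e, p₂) with hg'
    have hg'm : g' ∈ Mgam φ₀ Φ θ xb γ (s • e) p₂ := by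
      rw [hMg _ hseU p₂ hp₂]; rfl
    obtain ⟨hb', hne', hmin'⟩ := hg'm
    have hdomg' : Φ g' + p₂ ∈ θ.dom := (objFS_ne_top_iff _ _ _ _ _ _).mp hne'
    -- (i)
    have hi : φ₀ g' - ⟪s • e, g'⟫ + θ.val (Φ g' + p₂)
        ≤ φ₀ x - ⟪s • e, x⟫ + θ.val (Φ x + p₂) := by
      have := hmin' x hx
      rw [objFS_eq_coe _ _ _ _ _ _ hdomg', objFS_eq_coe _ _ _ _ _ _ hdomx] at this
      exact_mod_cast this
    -- (ii)
    have hii : φ₀ gp + θ.val (Φ gp + p₂) ≤ φ₀ g' + θ.val (Φ g' + p₂) := by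
      have := hmin g' hb'
      rw [objFS_eq_coe _ _ _ _ _ _ hdomgp, objFS_eq_coe _ _ _ _ _ _ hdomg'] at this
      have h2 : φ₀ gp - ⟪(0 : Ev n), gp⟫ + θ.val (Φ gp + p₂)
          ≤ φ₀ g' - ⟪(0 : Ev n), g'⟫ + θ.val (Φ g' + p₂) := by exact_mod_cast this
      simpa [inner_zero_left] using h2
    -- Lipschitz estimate
    have hlip : ‖g' - gp‖ ≤ cb * s := by
      have hmem1 : ((s • e, p₂) : Ev n × Ev m) ∈ U ×ˢ W := ⟨hseU, hp₂⟩
      have hmem2 : ((0, p₂) : Ev n × Ev m) ∈ U ×ˢ W := ⟨hU0, hp₂⟩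
      have := hg.dist_le_mul _ hmem1 _ hmem2
      rw [Prod.dist_eq] at this
      simp only [dist_self] at this
      have hd12 : dist (s • e) (0 : Ev n) = s := by
        rw [dist_zero_right, norm_smul, hnorme, Real.norm_eq_abs, abs_of_pos hs0, mul_one]
      rw [hd12] at this
      calc ‖g' - gp‖ = dist g' gp := (dist_eq_norm _ _).symm
        _ ≤ c * max s 0 := this
        _ = c * s := by rw [max_eq_left hs0.le]
        _ ≤ cb * s := by
            apply mul_le_mul_of_nonneg_right (le_max_left _ _) hs0.le
    -- inner product computations
    have hex : ⟪e, x - gp⟫ = d := by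
      rw [he, real_inner_smul_left, real_inner_self_eq_norm_sq]
      rw [hdd]
      field_simp
    have heg : ⟪e, gp - g'⟫ ≥ -(cb * s) := by
      have h1 : |⟪e, gp - g'⟫| ≤ ‖gp - g'‖ := by
        calc |⟪e, gp - g'⟫| ≤ ‖e‖ * ‖gp - g'‖ := abs_real_inner_le_norm _ _
          _ = ‖gp - g'‖ := by rw [hnorme, one_mul]
      have h2 : ‖gp - g'‖ = ‖g' - gp‖ := norm_sub_rev _ _
      linarith [neg_abs_le ⟪e, gp - g'⟫, hlip, h2 ▸ h1]
    have hkey : ⟪s • e, x⟫ - ⟪s • e, g'⟫ ≥ s * (d - cb * s) := by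
      have h1 : ⟪s • e, x⟫ - ⟪s • e, g'⟫ = s * ⟪e, x - g'⟫ := by
        simp only [real_inner_smul_left, inner_sub_right]; ring
      have h2 : ⟪e, x - g'⟫ = ⟪e, x - gp⟫ + ⟪e, gp - g'⟫ := by
        rw [← inner_add_right]
        congr 1
        abel
      rw [h1, h2, hex]
      have : d + ⟪e, gp - g'⟫ ≥ d - cb * s := by linarith
      exact mul_le_mul_of_nonneg_left this hs0.le
    have hsd : s * (d - cb * s) = d^2 / (4 * cb) := by
      rw [hs]
      field_simp
      ring
    have hfin : (1 / (4 * cb)) * d^2 = s * (d - cb * s) := by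
      rw [hsd]; ring
    rw [hdd] at hfin ⊢
    linarith [hi, hii, hkey, hfin]

/-- One-dimensional second-order upper estimate from a nonpositive second derivative. -/
lemma one_dim (ψ q : ℝ → ℝ) {h2 : ℝ} (δ : ℝ) (hδ : 0 < δ)
    (hder : ∀ t : ℝ, |t| < δ → HasDerivAt ψ (q t) t) (hq0 : q 0 = 0)
    (hq : HasDerivAt q h2 0) (hh2 : h2 ≤ 0) (ε : ℝ) (hε : 0 < ε) :
    ∀ᶠ t in 𝓝[>] (0:ℝ), ψ t ≤ ψ 0 + ε * t ^ 2 := by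
  have hlo := hasDerivAt_iff_isLittleO.mp hq
  have hev : ∀ᶠ t in 𝓝 (0:ℝ), ‖q t - q 0 - (t - 0) • h2‖ ≤ ε * ‖t - 0‖ :=
    hlo.bound hε
  have hq_le : ∀ᶠ t in 𝓝 (0:ℝ), 0 < t → q t ≤ ε * t := by
    filter_upwards [hev] with t ht hpos
    rw [hq0, sub_zero, sub_zero, smul_eq_mul, Real.norm_eq_abs, Real.norm_eq_abs,
      abs_of_pos hpos] at ht
    have := le_of_abs_le ht
    nlinarith [hh2, hpos.le]
  obtain ⟨δ₂, hδ₂, hδ₂'⟩ := Metric.eventually_nhds_iff.mp hq_le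
  have hmem : Set.Ioo (0:ℝ) (min δ δ₂) ∈ 𝓝[>] (0:ℝ) := by
    apply Ioo_mem_nhdsGT_of_mem
    exact ⟨le_refl _, lt_min hδ hδ₂⟩
  filter_upwards [hmem] with t ht
  obtain ⟨ht0, htm⟩ := ht
  have htδ : t < δ := lt_of_lt_of_le htm (min_le_left _ _)
  have htδ₂ : t < δ₂ := lt_of_lt_of_le htm (min_le_right _ _)
  -- MVT
  have hcont : ContinuousOn ψ (Set.Icc 0 t) := by
    intro y hy
    have : |y| < δ := by
      rw [abs_lt]
      constructor <;> [linarith [hy.1]; linarith [hy.2]]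
    exact ((hder y this).continuousAt).continuousWithinAt
  have hderiv : ∀ y ∈ Set.Ioo (0:ℝ) t, HasDerivAt ψ (q y) y := by
    intro y hy
    apply hder
    rw [abs_lt]
    constructor <;> [linarith [hy.1]; linarith [hy.2]]
  obtain ⟨cc, hcc, hslope⟩ := exists_hasDerivAt_eq_slope ψ q ht0 hcont hderiv
  have hqc : q cc ≤ ε * cc := by
    apply hδ₂' _ hcc.1
    rw [Real.dist_eq, sub_zero, abs_of_pos hcc.1]
    linarith [hcc.2]
  have ht' : ψ t - ψ 0 = q cc * t := by
    field_simp at hslope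
    linarith [hslope]
  have h1 : q cc * t ≤ ε * cc * t := mul_le_mul_of_nonneg_right hqc ht0.le
  have h2 : ε * cc * t ≤ ε * t * t :=
    mul_le_mul_of_nonneg_right (mul_le_mul_of_nonneg_left hcc.2.le hε.le) ht0.le
  nlinarith [ht', h1, h2]

/-- Quadratic bound near a critical point of a C² function. -/
lemma quad_bound (L : Ev n → ℝ) (xb : Ev n) (hL : ContDiffAt ℝ 2 L xb)
    (h0 : fderiv ℝ L xb = 0) :
    ∃ K : ℝ, 0 < K ∧ ∃ r : ℝ, 0 < r ∧
      ∀ x : Ev n, ‖x - xb‖ ≤ r → |L x - L xb| ≤ K * ‖x - xb‖ ^ 2 := by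
  have hC1 : ContDiffAt ℝ 1 (fderiv ℝ L) xb := hL.fderiv_right (by norm_num)
  obtain ⟨K, t, ht, hlip⟩ := hC1.exists_lipschitzOnWith
  obtain ⟨V, hV, hVon⟩ := hL.contDiffOn (le_refl 2) (by norm_num)
  have hdiff : ∀ᶠ y in 𝓝 xb, DifferentiableAt ℝ L y := by
    filter_upwards [eventually_eventually_nhds.mpr hV] with y hy
    exact (hVon.contDiffAt hy).differentiableAt (by norm_num)
  obtain ⟨V', hV', hVd⟩ := Metric.eventually_nhds_iff_ball.mp hdiff
  obtain ⟨rt, hrt, hrtt⟩ := Metric.mem_nhds_iff.mp ht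
  set r := min (V' / 2) (rt / 2) with hr
  have hr0 : 0 < r := lt_min (by linarith) (by linarith)
  refine ⟨K + 1, by positivity, r, hr0, ?_⟩
  intro x hx
  -- every point of the closed ball of radius ‖x - xb‖ around xb is in ball xb V' ∩ ball xb rt
  have hsub : Metric.closedBall xb ‖x - xb‖ ⊆ Metric.ball xb V' ∩ Metric.ball xb rt := by
    intro y hy
    rw [Metric.mem_closedBall, dist_eq_norm] at hy
    constructor
    · rw [Metric.mem_ball, dist_eq_norm]
      calc ‖y - xb‖ ≤ ‖x - xb‖ := hy
        _ ≤ r := hx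
        _ < V' := lt_of_le_of_lt (min_le_left _ _) (by linarith)
    · rw [Metric.mem_ball, dist_eq_norm]
      calc ‖y - xb‖ ≤ ‖x - xb‖ := hy
        _ ≤ r := hx
        _ < rt := lt_of_le_of_lt (min_le_right _ _) (by linarith)
  have hbound : ∀ y ∈ Metric.closedBall xb ‖x - xb‖,
      ‖fderiv ℝ L y‖ ≤ (K + 1) * ‖x - xb‖ := by
    intro y hy
    have hyt : y ∈ t := hrtt (Metric.ball_subset_ball (by linarith [lt_of_le_of_lt (min_le_right (V'/2) (rt/2)) (show rt/2 < rt by linarith)]) ((hsub hy).2))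
    have hxbt : xb ∈ t := hrtt (Metric.mem_ball_self hrt)
    have := hlip.dist_le_mul y hyt xb hxbt
    rw [dist_eq_norm, h0, sub_zero, dist_eq_norm] at this
    rw [Metric.mem_closedBall, dist_eq_norm] at hy
    calc ‖fderiv ℝ L y‖ ≤ K * ‖y - xb‖ := this
      _ ≤ (K + 1) * ‖x - xb‖ := by
          apply mul_le_mul _ hy (norm_nonneg _) (by positivity)
          simp only [le_add_iff_nonneg_right]
          norm_num
  have hdiff' : ∀ y ∈ Metric.closedBall xb ‖x - xb‖, DifferentiableAt ℝ L y := by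
    intro y hy
    apply hVd
    rw [Metric.mem_ball] at *
    exact (hsub hy).1
  have hmvt := (convex_closedBall xb ‖x - xb‖).norm_image_sub_le_of_norm_fderiv_le
    hdiff' hbound (Metric.mem_closedBall_self (norm_nonneg _))
    (by rw [Metric.mem_closedBall, dist_eq_norm])
  rw [Real.norm_eq_abs] at hmvt
  calc |L x - L xb| ≤ (K + 1) * ‖x - xb‖ * ‖x - xb‖ := hmvt
    _ = (K + 1) * ‖x - xb‖ ^ 2 := by ring

lemma hasGradientAt_inner_comp (Φ : Ev n → Ev m) (v : Ev m) (xb : Ev n)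
    (hΦ : DifferentiableAt ℝ Φ xb) :
    HasGradientAt (fun y => ⟪Φ y, v⟫) (adjD Φ xb v) xb := by
  have h1 : HasFDerivAt Φ (fderiv ℝ Φ xb) xb := hΦ.hasFDerivAt
  have h2 : HasFDerivAt (fun y => ⟪v, Φ y⟫)
      ((innerSL ℝ v).comp (fderiv ℝ Φ xb)) xb := ((innerSL ℝ v).hasFDerivAt).comp xb h1
  have h3 : (fun y : Ev n => ⟪Φ y, v⟫) = fun y => ⟪v, Φ y⟫ :=
    funext fun y => real_inner_comm _ _
  rw [hasGradientAt_iff_hasFDerivAt, h3]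
  refine h2.congr_fderiv ?_
  ext h
  simp only [InnerProductSpace.toDual_apply_apply, ContinuousLinearMap.coe_comp',
    Function.comp_apply, innerSL_apply_apply, adjD]
  rw [ContinuousLinearMap.adjoint_inner_left]

lemma hasDerivAt_line (xb ξ : Ev n) (t : ℝ) :
    HasDerivAt (fun s : ℝ => xb + s • ξ) ξ t := by
  simpa using ((hasDerivAt_id t).smul_const ξ).const_add xb

lemma fderiv_apply_eq_inner_gradient (L : Ev n → ℝ) (z ξ : Ev n) :
    fderiv ℝ L z ξ = ⟪gradient L z, ξ⟫ := by
  have h : fderiv ℝ L z = InnerProductSpace.toDual ℝ (Ev n) (gradient L z) :=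
    ((InnerProductSpace.toDual ℝ (Ev n)).apply_symm_apply _).symm
  rw [h, InnerProductSpace.toDual_apply_apply]

end Helpers

set_option maxHeartbeats 1600000 in
/-- full stability of a local minimizer of the canonically perturbed
composite problem rules out critical multipliers. -/
theorem stmt10 {n m : ℕ} (θ : CPWL m) (φ₀ : Ev n → ℝ) (Φ : Ev n → Ev m) (xb : Ev n)
    (hphi : ContDiffAt ℝ 2 φ₀ xb) (hPhi : ContDiffAt ℝ 2 Φ xb)
    (hdom : Φ xb ∈ θ.dom)
    (hfull : ∃ γ : ℝ, 0 < γ ∧ ∃ U ∈ 𝓝 (0 : Ev n), ∃ W ∈ 𝓝 (0 : Ev m),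
      (∃ (g : Ev n × Ev m → Ev n) (c : NNReal), LipschitzOnWith c g (U ×ˢ W) ∧
        (∀ p₁ ∈ U, ∀ p₂ ∈ W, Mgam φ₀ Φ θ xb γ p₁ p₂ = {g (p₁, p₂)}) ∧
        g (0, 0) = xb) ∧
      (∃ (mv : Ev n × Ev m → ℝ) (c' : NNReal), LipschitzOnWith c' mv (U ×ˢ W) ∧
        ∀ p₁ ∈ U, ∀ p₂ ∈ W, mgam φ₀ Φ θ xb γ p₁ p₂ = ((mv (p₁, p₂) : ℝ) : EReal))) :
    ∀ v ∈ LamCom φ₀ Φ θ xb, ¬ IsCriticalCom φ₀ Φ θ xb v := by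
  intro v hv
  rintro ⟨ξ, hξ0, w, hw, heqn⟩
  obtain ⟨hv1, hv2⟩ := hv
  obtain ⟨γ, hγ, U, hU, W, hW, ⟨g, c, hg, hMg, hg0⟩, -⟩ := hfull
  have hU0 : (0 : Ev n) ∈ U := mem_of_mem_nhds hU
  have hW0 : (0 : Ev m) ∈ W := mem_of_mem_nhds hW
  set zb := Φ xb with hzb
  set u := fderiv ℝ Φ xb ξ with hu
  obtain ⟨hmono, hevθ⟩ := θ.cone_key hv2 hw
  set cb : ℝ := max (c : ℝ) 1 with hcb
  have hcb1 : (1:ℝ) ≤ cb := le_max_right _ _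
  have hcb0 : (0:ℝ) < cb := by linarith
  set κ : ℝ := 1 / (4 * cb) with hκdef
  have hκ : 0 < κ := by positivity
  have hξn : 0 < ‖ξ‖ := norm_pos_iff.mpr hξ0
  set ε : ℝ := κ * ‖ξ‖^2 / 16 with hεdef
  have hε0 : 0 < ε := by positivity
  -- the Lagrangian
  set Lv : Ev n → ℝ := fun y => φ₀ y + ⟪Φ y, v⟫ with hLvdef
  have hφd : DifferentiableAt ℝ φ₀ xb := hphi.differentiableAt (by norm_num)
  have hΦd : DifferentiableAt ℝ Φ xb := hPhi.differentiableAt (by norm_num)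
  have hLv2 : ContDiffAt ℝ 2 Lv xb := hphi.add (hPhi.inner ℝ contDiffAt_const)
  have hgradLv : HasGradientAt Lv (gradient φ₀ xb + adjD Φ xb v) xb := by
    have g1 : HasGradientAt φ₀ (gradient φ₀ xb) xb := hφd.hasGradientAt
    have g2 : HasGradientAt (fun y => ⟪Φ y, v⟫) (adjD Φ xb v) xb :=
      hasGradientAt_inner_comp Φ v xb hΦd
    rw [hasGradientAt_iff_hasFDerivAt] at g1 g2 ⊢
    rw [map_add]; exact g1.add g2
  have hgradLv0 : HasGradientAt Lv 0 xb := by rwa [hv1] at hgradLv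
  have hgrad0 : gradient Lv xb = 0 := hgradLv0.gradient
  have hfd0 : fderiv ℝ Lv xb = 0 := by
    have h1 : HasFDerivAt Lv (InnerProductSpace.toDual ℝ (Ev n) 0) xb :=
      hasGradientAt_iff_hasFDerivAt.mp hgradLv0
    rw [h1.fderiv, map_zero]
  -- Hessian sign
  set H := HessOp φ₀ Φ v xb with hHdef
  have hHsign : ⟪H ξ, ξ⟫ ≤ 0 := by
    have h1 : ⟪H ξ + adjD Φ xb w, ξ⟫ = 0 := by rw [heqn]; exact inner_zero_left _
    have h2 : ⟪adjD Φ xb w, ξ⟫ = ⟪w, u⟫ := by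
      simp only [adjD]
      rw [ContinuousLinearMap.adjoint_inner_left]
    rw [inner_add_left, h2] at h1
    have h3 : ⟪w, u⟫ = ⟪u, w⟫ := real_inner_comm _ _
    linarith [hmono]
  -- Hessian is the derivative of gradient Lv
  have hHLv : H = fderiv ℝ (gradient Lv) xb := rfl
  have hGC1 : ContDiffAt ℝ 1 (gradient Lv) xb := by
    have hf : ContDiffAt ℝ 1 (fderiv ℝ Lv) xb := hLv2.fderiv_right (by norm_num)
    have hgr : gradient Lv
        = fun x => (InnerProductSpace.toDual ℝ (Ev n)).symm (fderiv ℝ Lv x) := rfl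
    rw [hgr]
    exact ((InnerProductSpace.toDual ℝ (Ev n)).symm.contDiff.contDiffAt).comp xb hf
  have hGdiff : DifferentiableAt ℝ (gradient Lv) xb := hGC1.differentiableAt one_ne_zero
  -- differentiability of Lv near xb
  have hdiffev : ∀ᶠ y in 𝓝 xb, DifferentiableAt ℝ Lv y := by
    obtain ⟨V, hV, hVon⟩ := hLv2.contDiffOn (le_refl 2) (by norm_num)
    filter_upwards [eventually_eventually_nhds.mpr hV] with y hy
    exact (hVon.contDiffAt hy).differentiableAt (by norm_num)
  obtain ⟨rd, hrd0, hball⟩ := Metric.eventually_nhds_iff.mp hdiffev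
  -- the 1-D functions
  set ψ : ℝ → ℝ := fun t => Lv (xb + t • ξ) with hψdef
  set q : ℝ → ℝ := fun t => ⟪gradient Lv (xb + t • ξ), ξ⟫ with hqdef
  set δ : ℝ := rd / (‖ξ‖ + 1) with hδdef
  have hδ0 : 0 < δ := by positivity
  have hder : ∀ t : ℝ, |t| < δ → HasDerivAt ψ (q t) t := by
    intro t ht
    have hmem : dist (xb + t • ξ) xb < rd := by
      rw [dist_eq_norm, add_sub_cancel_left, norm_smul, Real.norm_eq_abs]
      have h1 : |t| * ‖ξ‖ ≤ |t| * (‖ξ‖ + 1) :=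
        mul_le_mul_of_nonneg_left (by linarith) (abs_nonneg t)
      have h2 : |t| * (‖ξ‖ + 1) < δ * (‖ξ‖ + 1) :=
        mul_lt_mul_of_pos_right ht (by positivity)
      have h3 : δ * (‖ξ‖ + 1) = rd := by rw [hδdef]; field_simp
      linarith
    have hLd : HasFDerivAt Lv (fderiv ℝ Lv (xb + t • ξ)) (xb + t • ξ) :=
      (hball hmem).hasFDerivAt
    have := hLd.comp_hasDerivAt t (hasDerivAt_line xb ξ t)
    rwa [fderiv_apply_eq_inner_gradient] at this
  have hq0 : q 0 = 0 := by
    simp only [hqdef, zero_smul, add_zero, hgrad0, inner_zero_left]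
  have hqD : HasDerivAt q ⟪H ξ, ξ⟫ 0 := by
    have hcomp : HasDerivAt (fun t : ℝ => gradient Lv (xb + t • ξ)) (H ξ) 0 := by
      have h0 : HasFDerivAt (gradient Lv) (fderiv ℝ (gradient Lv) xb) (xb + (0:ℝ) • ξ) := by
        simpa using hGdiff.hasFDerivAt
      have h1 := h0.comp_hasDerivAt 0 (hasDerivAt_line xb ξ 0)
      exact h1
    have h2 := HasDerivAt.inner ℝ hcomp (hasDerivAt_const (0:ℝ) ξ)
    exact h2.congr_deriv (by simp)
  have hψev := one_dim ψ q δ hδ0 hder hq0 hqD hHsign ε hε0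
  -- quadratic bound for Lv
  obtain ⟨K, hK0, r, hr0, hquad⟩ := quad_bound Lv xb hLv2 hfd0
  -- radius inside U
  obtain ⟨rU, hrU0, hrUsub⟩ := Metric.mem_nhds_iff.mp hU
  set ρ : ℝ := rU / 2 with hρdef
  have hρ0 : 0 < ρ := by positivity
  have hρU : Metric.closedBall (0 : Ev n) ρ ⊆ U :=
    subset_trans (Metric.closedBall_subset_ball (by linarith)) hrUsub
  obtain ⟨rW, hrW0, hrWsub⟩ := Metric.mem_nhds_iff.mp hW
  -- choice of ε₂
  set ε₂ : ℝ := min (‖ξ‖ / (2 * cb)) (Real.sqrt (ε / (K * cb ^ 2))) with hε₂def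
  have hε₂0 : 0 < ε₂ := lt_min (by positivity) (Real.sqrt_pos.mpr (by positivity))
  have hε₂ξ : cb * ε₂ ≤ ‖ξ‖ / 2 := by
    have := min_le_left (‖ξ‖ / (2 * cb)) (Real.sqrt (ε / (K * cb ^ 2)))
    calc cb * ε₂ ≤ cb * (‖ξ‖ / (2 * cb)) := by
          apply mul_le_mul_of_nonneg_left _ hcb0.le
          rw [hε₂def]; exact this
      _ = ‖ξ‖ / 2 := by field_simp
    
  have hKb : K * (cb * ε₂) ^ 2 ≤ ε := by
    have h1 : ε₂ ≤ Real.sqrt (ε / (K * cb ^ 2)) := min_le_right _ _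
    have h2 : ε₂ ^ 2 ≤ ε / (K * cb ^ 2) := by
      calc ε₂ ^ 2 ≤ Real.sqrt (ε / (K * cb ^ 2)) ^ 2 := by
            apply pow_le_pow_left₀ hε₂0.le h1
        _ = ε / (K * cb ^ 2) := Real.sq_sqrt (by positivity)
    calc K * (cb * ε₂) ^ 2 = (K * cb ^ 2) * ε₂ ^ 2 := by ring
      _ ≤ (K * cb ^ 2) * (ε / (K * cb ^ 2)) := by
          apply mul_le_mul_of_nonneg_left h2 (by positivity)
      _ = ε := by field_simp
  -- perturbation path
  set p₂t : ℝ → Ev m := fun t => zb + t • u - Φ (xb + t • ξ) with hp₂def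
  have hΦline : HasDerivAt (fun t : ℝ => Φ (xb + t • ξ)) u 0 := by
    have h0 : HasFDerivAt Φ (fderiv ℝ Φ xb) (xb + (0:ℝ) • ξ) := by
      simpa using hΦd.hasFDerivAt
    have h1 := h0.comp_hasDerivAt 0 (hasDerivAt_line xb ξ 0)
    exact h1
  have hlo := hasDerivAt_iff_isLittleO.mp hΦline
  have hptb : ∀ᶠ t in 𝓝 (0:ℝ), ‖p₂t t‖ ≤ ε₂ * ‖t‖ := by
    have := hlo.bound hε₂0
    filter_upwards [this] with t ht
    have heq : p₂t t = -(Φ (xb + t • ξ) - Φ (xb + (0:ℝ) • ξ) - (t - 0) • u) := by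
      simp only [hp₂def, zero_smul, add_zero, sub_zero, hzb]
      abel
    rw [heq, norm_neg]
    simpa using ht
  -- threshold for t
  set τ : ℝ := min (min (γ / ‖ξ‖) (cb * ρ / ‖ξ‖)) (min (r / (cb * ε₂)) (rW / (2 * ε₂)))
    with hτdef
  have hτ0 : 0 < τ := by
    apply lt_min (lt_min (by positivity) (by positivity))
      (lt_min (by positivity) (by positivity))
  -- gather all eventual facts and pick t
  have hmain : ∀ᶠ t in 𝓝[>] (0:ℝ), False := by
    filter_upwards [Ioo_mem_nhdsGT_of_mem (Set.mem_Ico.mpr ⟨le_refl 0, hτ0⟩),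
      hptb.filter_mono nhdsWithin_le_nhds, hevθ, hψev] with t htIoo hpt hθt hψt
    obtain ⟨ht0, htτ⟩ := htIoo
    have htγ : t * ‖ξ‖ ≤ γ := by
      have h1 : t < γ / ‖ξ‖ :=
        lt_of_lt_of_le htτ (le_trans (min_le_left _ _) (min_le_left _ _))
      rw [lt_div_iff₀ hξn] at h1
      nlinarith only [h1, hξn, ht0]
    have htρ : t * ‖ξ‖ ≤ cb * ρ := by
      have h1 : t < cb * ρ / ‖ξ‖ :=
        lt_of_lt_of_le htτ (le_trans (min_le_left _ _) (min_le_right _ _))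
      rw [lt_div_iff₀ hξn] at h1
      nlinarith only [h1, hξn, ht0]
    have htr : cb * (ε₂ * t) ≤ r := by
      have h1 : t < r / (cb * ε₂) :=
        lt_of_lt_of_le htτ (le_trans (min_le_right _ _) (min_le_left _ _))
      rw [lt_div_iff₀ (by positivity)] at h1
      have h2 : cb * (ε₂ * t) = t * (cb * ε₂) := by ring
      linarith only [h1, h2]
    have htW : ε₂ * t < rW := by
      have h1 : t < rW / (2 * ε₂) :=
        lt_of_lt_of_le htτ (le_trans (min_le_right _ _) (min_le_right _ _))
      rw [lt_div_iff₀ (by positivity)] at h1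
      have h2 : 2 * (ε₂ * t) = t * (2 * ε₂) := by ring
      have h3 : 0 < ε₂ * t := by positivity
      linarith only [h1, h2, h3]
    set pt := p₂t t with hptdef
    have hptn : ‖pt‖ ≤ ε₂ * t := by
      have := hpt
      rwa [Real.norm_eq_abs, abs_of_pos ht0] at this
    have hptW : pt ∈ W := by
      apply hrWsub
      rw [Metric.mem_ball, dist_zero_right]
      exact lt_of_le_of_lt hptn htW
    set xt := xb + t • ξ with hxtdef
    have hxtb : ‖xt - xb‖ ≤ γ := by
      rw [hxtdef, add_sub_cancel_left, norm_smul, Real.norm_eq_abs, abs_of_pos ht0]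
      exact htγ
    have hkeyeq : Φ xt + pt = zb + t • u := by
      simp only [hptdef, hp₂def, hxtdef]
      abel
    obtain ⟨hdomt, hvalt⟩ := hθt
    have hdomxt : Φ xt + pt ∈ θ.dom := by rw [hkeyeq]; exact hdomt
    set gt := g (0, pt) with hgtdef
    -- gt is close to xb
    have hgtb : ‖gt - xb‖ ≤ cb * (ε₂ * t) := by
      have hmem1 : ((0, pt) : Ev n × Ev m) ∈ U ×ˢ W := ⟨hU0, hptW⟩
      have hmem2 : ((0, 0) : Ev n × Ev m) ∈ U ×ˢ W := ⟨hU0, hW0⟩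
      have hd := hg.dist_le_mul _ hmem1 _ hmem2
      rw [hg0] at hd
      rw [Prod.dist_eq] at hd
      simp only [dist_self] at hd
      have hdp : dist pt (0 : Ev m) = ‖pt‖ := dist_zero_right _
      calc ‖gt - xb‖ = dist gt xb := (dist_eq_norm _ _).symm
        _ ≤ c * max 0 ‖pt‖ := by rw [← hdp]; exact hd
        _ = c * ‖pt‖ := by rw [max_eq_right (norm_nonneg _)]
        _ ≤ cb * (ε₂ * t) := by
            apply mul_le_mul (le_max_left _ _) hptn (norm_nonneg _) hcb0.le
    -- dt bounds
    set dt := ‖xt - gt‖ with hdtdef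
    have hxtxb : ‖xt - xb‖ = t * ‖ξ‖ := by
      rw [hxtdef, add_sub_cancel_left, norm_smul, Real.norm_eq_abs, abs_of_pos ht0]
    have hdtlow : t * ‖ξ‖ / 2 ≤ dt := by
      have h1 : ‖xt - xb‖ ≤ dt + ‖gt - xb‖ := by
        calc ‖xt - xb‖ = ‖(xt - gt) + (gt - xb)‖ := by congr 1; abel
          _ ≤ ‖xt - gt‖ + ‖gt - xb‖ := norm_add_le _ _
      have h2 : cb * (ε₂ * t) ≤ t * ‖ξ‖ / 2 := by
        have := mul_le_mul_of_nonneg_right hε₂ξ ht0.le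
        calc cb * (ε₂ * t) = cb * ε₂ * t := by ring
          _ ≤ ‖ξ‖ / 2 * t := this
          _ = t * ‖ξ‖ / 2 := by ring
      rw [hxtxb] at h1
      linarith only [h1, h2, hgtb]
    have hdthigh : dt ≤ 2 * cb * ρ := by
      have h1 : dt ≤ ‖xt - xb‖ + ‖gt - xb‖ := by
        calc dt = ‖(xt - xb) - (gt - xb)‖ := by rw [hdtdef]; congr 1; abel
          _ ≤ ‖xt - xb‖ + ‖gt - xb‖ := norm_sub_le _ _
      have h2 : cb * (ε₂ * t) ≤ t * ‖ξ‖ / 2 := by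
        have := mul_le_mul_of_nonneg_right hε₂ξ ht0.le
        calc cb * (ε₂ * t) = cb * ε₂ * t := by ring
          _ ≤ ‖ξ‖ / 2 * t := this
          _ = t * ‖ξ‖ / 2 := by ring
      rw [hxtxb] at h1
      have h3 : dt ≤ 2 * (t * ‖ξ‖) := by
        have h4 : 0 ≤ t * ‖ξ‖ := mul_nonneg ht0.le (norm_nonneg ξ)
        linarith only [h1, h2, hgtb, h4]
      calc dt ≤ 2 * (t * ‖ξ‖) := h3
        _ ≤ 2 * (cb * ρ) := by linarith only [htρ]
        _ = 2 * cb * ρ := by ring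
    -- growth
    have hgrow := growth θ φ₀ Φ xb γ U W hU g c hg hMg ρ hρ0 hρU pt hptW
      xt hxtb hdomxt (by rw [← hgtdef, ← hdtdef] at *; exact hdthigh)
    rw [← hcb, ← hgtdef, ← hdtdef, ← hκdef] at hgrow
    -- extract dom membership of gt
    have hgtm : gt ∈ Mgam φ₀ Φ θ xb γ 0 pt := by
      rw [hMg 0 hU0 pt hptW]; rfl
    obtain ⟨hgtball, hgtne, -⟩ := hgtm
    have hdomgt : Φ gt + pt ∈ θ.dom := (objFS_ne_top_iff _ _ _ _ _ _).mp hgtne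
    -- upper estimate for the rhs of growth
    have hUB : φ₀ xt + θ.val (Φ xt + pt)
        ≤ ψ t + ⟪v, pt⟫ - ⟪v, zb⟫ + θ.val zb := by
      rw [hkeyeq]
      have h1 : φ₀ xt + θ.val (zb + t • u) ≤ φ₀ xt + (θ.val zb + t * ⟪v, u⟫) := by
        linarith only [hvalt]
      have hψt : ψ t = φ₀ xt + ⟪v, Φ xt⟫ := by
        show φ₀ (xb + t • ξ) + ⟪Φ (xb + t • ξ), v⟫ = φ₀ xt + ⟪v, Φ xt⟫
        rw [hxtdef, real_inner_comm]
      have hpteq : pt = zb + t • u - Φ xt := rfl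
      have h2 : φ₀ xt + (θ.val zb + t * ⟪v, u⟫)
          = ψ t + ⟪v, pt⟫ - ⟪v, zb⟫ + θ.val zb := by
        have h3 : ⟪v, pt⟫ = ⟪v, zb⟫ + t * ⟪v, u⟫ - ⟪v, Φ xt⟫ := by
          rw [hpteq, inner_sub_right, inner_add_right, inner_smul_right]
        rw [hψt, h3]
        ring
      linarith only [h1, h2]
    -- lower estimate for the lhs of growth
    have hLB : Lv gt + ⟪v, pt⟫ - ⟪v, zb⟫ + θ.val zb
        ≤ φ₀ gt + θ.val (Φ gt + pt) := by
      have h1 : ⟪v, (Φ gt + pt) - zb⟫ ≤ θ.val (Φ gt + pt) - θ.val zb :=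
        hv2.2 _ hdomgt
      have h2 : ⟪v, (Φ gt + pt) - zb⟫ = ⟪v, Φ gt⟫ + ⟪v, pt⟫ - ⟪v, zb⟫ := by
        rw [inner_sub_right, inner_add_right]
      have h3 : ⟪Φ gt, v⟫ = ⟪v, Φ gt⟫ := real_inner_comm _ _
      simp only [hLvdef]
      rw [h3]
      linarith only [h1, h2]
    -- quadratic bound at gt
    have hquadgt : ψ 0 - ε * t ^ 2 ≤ Lv gt := by
      have h1 : ‖gt - xb‖ ≤ r := le_trans hgtb htr
      have h2 := hquad gt h1
      have h3 : K * ‖gt - xb‖ ^ 2 ≤ K * (cb * (ε₂ * t)) ^ 2 := by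
        apply mul_le_mul_of_nonneg_left _ hK0.le
        apply pow_le_pow_left₀ (norm_nonneg _) hgtb
      have h4 : K * (cb * (ε₂ * t)) ^ 2 = (K * (cb * ε₂) ^ 2) * t ^ 2 := by ring
      have h5 : (K * (cb * ε₂) ^ 2) * t ^ 2 ≤ ε * t ^ 2 :=
        mul_le_mul_of_nonneg_right hKb (sq_nonneg t)
      have h6 : ψ 0 = Lv xb := by simp [hψdef]
      have h7 := abs_le.mp h2
      rw [h6]
      linarith only [h7.1, h3, h4, h5]
    -- final contradiction
    have hκd : κ * (t * ‖ξ‖ / 2) ^ 2 ≤ κ * dt ^ 2 := by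
      apply mul_le_mul_of_nonneg_left _ hκ.le
      apply pow_le_pow_left₀ (by positivity) hdtlow
    have hchain : ψ 0 - ε * t ^ 2 + κ * dt ^ 2 ≤ ψ 0 + ε * t ^ 2 := by
      calc ψ 0 - ε * t ^ 2 + κ * dt ^ 2
          ≤ Lv gt + κ * dt ^ 2 := by linarith only [hquadgt]
        _ = Lv gt + ⟪v, pt⟫ - ⟪v, zb⟫ + θ.val zb + κ * dt ^ 2
            - (⟪v, pt⟫ - ⟪v, zb⟫ + θ.val zb) := by ring
        _ ≤ φ₀ gt + θ.val (Φ gt + pt) + κ * dt ^ 2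
            - (⟪v, pt⟫ - ⟪v, zb⟫ + θ.val zb) := by linarith only [hLB]
        _ ≤ φ₀ xt + θ.val (Φ xt + pt)
            - (⟪v, pt⟫ - ⟪v, zb⟫ + θ.val zb) := by linarith only [hgrow]
        _ ≤ ψ t := by linarith only [hUB]
        _ ≤ ψ 0 + ε * t ^ 2 := hψt
    have hfinal : κ * (t * ‖ξ‖ / 2) ^ 2 ≤ 2 * ε * t ^ 2 := by
      linarith only [hκd, hchain]
    have hεeq : 2 * ε * t ^ 2 = κ * ‖ξ‖ ^ 2 / 8 * t ^ 2 := by rw [hεdef]; ring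
    rw [hεeq] at hfinal
    have hpos2 : 0 < κ * ‖ξ‖ ^ 2 * t ^ 2 := by positivity
    have heq2 : κ * (t * ‖ξ‖ / 2) ^ 2 = κ * ‖ξ‖ ^ 2 * t ^ 2 / 4 := by ring
    rw [heq2] at hfinal
    have heq3 : κ * ‖ξ‖ ^ 2 / 8 * t ^ 2 = κ * ‖ξ‖ ^ 2 * t ^ 2 / 8 := by ring
    rw [heq3] at hfinal
    linarith only [hfinal, hpos2]
  obtain ⟨t, hfalse⟩ := hmain.exists
  exact hfalse
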